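/- If r < 1, then the fixed point x_l* = 1/(γ̲ + 2·b̄) of f is globally attracting: for every x ≥ 0 the iterates fⁿ(x) converge to x_l* as n → ∞. -/

import Mathlib

set_option maxHeartbeats 1000000

/-- If r < 1, the fixed point x_l* = 1/(γ̲ + 2b̄) of f is globally
attracting on [0,∞). -/
theorem left_fixed_point_globally_attracting
    (bU bL gU gL r xl xu xm : ℝ) (f : ℝ → ℝ)
    (h1 : bU ≥ gU) (h2 : gU ≥ bL) (h3 : bL ≥ gL) (h4 : gL ≥ 0)
    (h5 : 0 < bL) (h6 : bL < bU) (h7 : gL < gU)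
    (hr : r = (gU - gL) / (bU - bL))
    (hxl : xl = 1 / (gL + 2 * bU * r))
    (hxu : xu = 1 / (gU + 2 * bL * r))
    (hxm : xm = 1 / gU)
    (hf1 : ∀ x : ℝ, 0 ≤ x → x ≤ xl → f x = (1 - gL * x) / (2 * bU))
    (hf2 : ∀ x : ℝ, xl ≤ x → x ≤ xu → f x = r * x)
    (hf3 : ∀ x : ℝ, xu ≤ x → x ≤ xm → f x = (1 - gU * x) / (2 * bL))
    (hf4 : ∀ x : ℝ, xm ≤ x → f x = 0)
    (hrlt : r < 1) :
    f (1 / (gL + 2 * bU)) = 1 / (gL + 2 * bU) ∧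
    ∀ x : ℝ, 0 ≤ x →
      Filter.Tendsto (fun n => f^[n] x) Filter.atTop (nhds (1 / (gL + 2 * bU))) := by
  have hbU : 0 < bU := h5.trans h6
  have hgU : 0 < gU := lt_of_lt_of_le h5 h2
  have hdb : (0:ℝ) < bU - bL := by linarith
  have hdg : (0:ℝ) < gU - gL := by linarith
  have hr0 : 0 < r := by rw [hr]; exact div_pos hdg hdb
  have hrmul : r * (bU - bL) = gU - gL := by rw [hr]; field_simp
  have hA : (0:ℝ) < gL + 2 * bU := by linarith
  have hB : (0:ℝ) < gL + 2 * bU * r := by linarith [mul_pos hbU hr0]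
  have hC : (0:ℝ) < gU + 2 * bL * r := by linarith [mul_pos h5 hr0]
  have hD : (0:ℝ) < gL + 2 * bU - gU := by linarith
  set x' : ℝ := 1 / (gL + 2 * bU) with hx'def
  have hx'0 : 0 < x' := one_div_pos.mpr hA
  have hxl0 : 0 < xl := by rw [hxl]; exact one_div_pos.mpr hB
  have hx'xl : x' ≤ xl := by
    rw [hxl, hx'def]
    apply one_div_le_one_div_of_le hB
    linarith [mul_pos hbU (show (0:ℝ) < 1 - r by linarith)]
  have hlu : xl ≤ xu := by
    rw [hxl, hxu]
    apply one_div_le_one_div_of_le hC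
    linarith [hrmul]
  have hum : xu ≤ xm := by
    rw [hxu, hxm]
    apply one_div_le_one_div_of_le hgU
    linarith [mul_pos h5 hr0]
  -- the contraction constant
  set c : ℝ := max (max (gL / (2 * bU)) r) (gU / (gL + 2 * bU - gU)) with hcdef
  have hc_r : r ≤ c := le_max_of_le_left (le_max_right _ _)
  have hc1le : gL / (2 * bU) ≤ c := le_max_of_le_left (le_max_left _ _)
  have hc3le : gU / (gL + 2 * bU - gU) ≤ c := le_max_right _ _
  have hc0 : 0 ≤ c := le_trans hr0.le hc_r
  have hgUlt : gU - gL < bU - bL := by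
    linarith [mul_pos (show (0:ℝ) < 1 - r by linarith) hdb, hrmul]
  have hc1 : c < 1 := by
    apply max_lt (max_lt _ hrlt)
    · rw [div_lt_one hD]; linarith
    · rw [div_lt_one (show (0:ℝ) < 2 * bU by linarith)]; linarith
  -- key identities
  have hfix : f x' = x' := by
    rw [hf1 x' hx'0.le hx'xl, hx'def]
    rw [div_eq_iff (show (2:ℝ) * bU ≠ 0 by positivity)]
    field_simp
    ring
  have hgLxl : gL * xl ≤ 1 := by
    rw [hxl, mul_one_div, div_le_one hB]
    linarith [mul_pos hbU hr0]
  have hgUxm : gU * xm = 1 := by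
    rw [hxm]; field_simp
  have id2 : x' - r * xl = gL / (2 * bU) * (xl - x') := by
    rw [hxl, hx'def]
    field_simp
    ring
  have idu : 2 * bL * (r * xu) = 1 - gU * xu := by
    rw [hxu]
    field_simp
    ring
  have idm : x' = gU / (gL + 2 * bU - gU) * (xm - x') := by
    rw [hxm, hx'def]
    field_simp
  have hx'cm : x' ≤ c * (xm - x') := by
    calc x' = gU / (gL + 2 * bU - gU) * (xm - x') := idm
      _ ≤ c * (xm - x') := by
          apply mul_le_mul_of_nonneg_right hc3le
          linarith [hx'xl, hlu, hum]
  have h2bL : (0:ℝ) < 2 * bL := by linarith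
  -- step-2 lower bound ingredient
  have hstep2 : ∀ x : ℝ, xl ≤ x → x' - r * x ≤ c * (x - x') := by
    intro x hxlx
    have e1 : r * xl ≤ r * x := mul_le_mul_of_nonneg_left hxlx hr0.le
    have e2 : gL / (2 * bU) * (xl - x') ≤ c * (xl - x') :=
      mul_le_mul_of_nonneg_right hc1le (by linarith)
    have e3 : c * (xl - x') ≤ c * (x - x') :=
      mul_le_mul_of_nonneg_left (by linarith) hc0
    linarith [id2]
  -- the contraction property
  have key : ∀ x : ℝ, 0 ≤ x → 0 ≤ f x ∧ |f x - x'| ≤ c * |x - x'| := by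
    intro x hx
    rcases le_or_gt x xl with hcase1 | hcase1
    · -- branch 1
      have hfx : f x = (1 - gL * x) / (2 * bU) := hf1 x hx hcase1
      have hnum : gL * x ≤ 1 :=
        le_trans (mul_le_mul_of_nonneg_left hcase1 h4) hgLxl
      constructor
      · rw [hfx]; exact div_nonneg (by linarith) (by linarith)
      · have heq : f x - x' = -(gL / (2 * bU)) * (x - x') := by
          rw [hfx, hx'def]
          field_simp
          ring
        rw [heq, abs_mul, abs_neg, abs_of_nonneg (by positivity)]
        exact mul_le_mul_of_nonneg_right hc1le (abs_nonneg _)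
    · have hxlx : xl ≤ x := hcase1.le
      have hxx' : x' ≤ x := le_trans hx'xl hxlx
      have habs : |x - x'| = x - x' := abs_of_nonneg (by linarith)
      rcases le_or_gt x xu with hcase2 | hcase2
      · -- branch 2
        have hfx : f x = r * x := hf2 x hxlx hcase2
        constructor
        · rw [hfx]; exact mul_nonneg hr0.le hx
        · rw [hfx, habs, abs_le]
          constructor
          · linarith [hstep2 x hxlx]
          · have e1 : r * x ≤ c * x := mul_le_mul_of_nonneg_right hc_r hx
            have e2 : (0:ℝ) ≤ (1 - c) * x' :=
              mul_nonneg (by linarith) hx'0.le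
            linarith
      · have hxux : xu ≤ x := hcase2.le
        rcases le_or_gt x xm with hcase3 | hcase3
        · -- branch 3
          have hfx0 : f x = (1 - gU * x) / (2 * bL) := hf3 x hxux hcase3
          have hu : 2 * bL * f x = 1 - gU * x := by
            rw [hfx0]; field_simp
          have hgux : gU * x ≤ gU * xm := mul_le_mul_of_nonneg_left hcase3 hgU.le
          have hfnn : 0 ≤ f x := by
            rw [hfx0]
            exact div_nonneg (by linarith [hgUxm]) (by linarith)
          refine ⟨hfnn, ?_⟩
          rw [habs, abs_le]
          have hguxu : gU * xu ≤ gU * x := mul_le_mul_of_nonneg_left hxux hgU.le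
          constructor
          · -- lower:  -(c*(x-x')) ≤ f x - x'
            rcases le_or_gt (gU / (2 * bL)) c with hs | hs
            · have hgUc : gU ≤ c * (2 * bL) := by
                rwa [div_le_iff₀ h2bL] at hs
              have hstep : x' - r * xu ≤ c * (xu - x') := hstep2 xu hlu
              have hprod : (0:ℝ) ≤ (c * (2 * bL) - gU) * (x - xu) :=
                mul_nonneg (by linarith) (by linarith)
              have hmul : 2 * bL * (x' - r * xu) ≤ 2 * bL * (c * (xu - x')) :=
                mul_le_mul_of_nonneg_left hstep h2bL.le
              have hfin : 2 * bL * (x' - f x) ≤ 2 * bL * (c * (x - x')) := by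
                linarith [hu, idu, hprod, hmul]
              have := (mul_le_mul_iff_of_pos_left h2bL).mp hfin
              linarith
            · have hgUc : c * (2 * bL) ≤ gU := by
                have hsle := hs.le
                rwa [le_div_iff₀ h2bL] at hsle
              have hprod : (0:ℝ) ≤ (gU - c * (2 * bL)) * (xm - x) :=
                mul_nonneg (by linarith) (by linarith)
              have hmul : 2 * bL * x' ≤ 2 * bL * (c * (xm - x')) :=
                mul_le_mul_of_nonneg_left hx'cm h2bL.le
              have hfin : 2 * bL * (x' - f x) ≤ 2 * bL * (c * (x - x')) := by
                linarith [hu, hgUxm, hprod, hmul]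
              have := (mul_le_mul_iff_of_pos_left h2bL).mp hfin
              linarith
          · -- upper:  f x - x' ≤ c*(x-x')
            have hfle : f x ≤ r * xu := by
              have hmul : 2 * bL * f x ≤ 2 * bL * (r * xu) := by
                linarith [hu, idu, hguxu]
              exact (mul_le_mul_iff_of_pos_left h2bL).mp hmul
            have e0 : (0:ℝ) ≤ (1 - r) * x' :=
              mul_nonneg (by linarith) hx'0.le
            have e2 : r * (xu - x') ≤ c * (xu - x') :=
              mul_le_mul_of_nonneg_right hc_r (by linarith [hlu, hx'xl])
            have e3 : c * (xu - x') ≤ c * (x - x') :=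
              mul_le_mul_of_nonneg_left (by linarith) hc0
            linarith [hfle, e0, e2, e3]
        · -- branch 4
          have hfx : f x = 0 := hf4 x hcase3.le
          refine ⟨by rw [hfx], ?_⟩
          rw [hfx, habs, zero_sub, abs_neg, abs_of_nonneg hx'0.le]
          have : c * (xm - x') ≤ c * (x - x') :=
            mul_le_mul_of_nonneg_left (by linarith) hc0
          linarith [hx'cm]
  -- iterate the contraction
  have iter : ∀ n : ℕ, ∀ x : ℝ, 0 ≤ x →
      0 ≤ f^[n] x ∧ |f^[n] x - x'| ≤ c ^ n * |x - x'| := by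
    intro n
    induction n with
    | zero => intro x hx; simpa using hx
    | succ n ih =>
        intro x hx
        obtain ⟨hnn, hbd⟩ := ih x hx
        obtain ⟨hnn', hbd'⟩ := key _ hnn
        rw [Function.iterate_succ_apply']
        refine ⟨hnn', ?_⟩
        calc |f (f^[n] x) - x'| ≤ c * |f^[n] x - x'| := hbd'
          _ ≤ c * (c ^ n * |x - x'|) := mul_le_mul_of_nonneg_left hbd hc0
          _ = c ^ (n + 1) * |x - x'| := by ring
  refine ⟨hfix, ?_⟩
  intro x hx
  rw [tendsto_iff_dist_tendsto_zero]
  simp only [Real.dist_eq]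
  have hlim : Filter.Tendsto (fun n : ℕ => c ^ n * |x - x'|) Filter.atTop (nhds 0) := by
    simpa using (tendsto_pow_atTop_nhds_zero_of_lt_one hc0 hc1).mul_const |x - x'|
  exact squeeze_zero (fun n => abs_nonneg _) (fun n => (iter n x hx).2) hlim
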